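/- For every U ∈ SL(2,ℂ) the (0,0)-entry of φ(U) is given by φ(U)₀₀ = (|U₁₁|² + |U₁₂|² + |U₂₁|² + |U₂₂|²)/2, and in particular φ(U)₀₀ > 0 (the matrix φ(U) is orthochronous). (Formula (5.18).) -/

import Mathlib

open Matrix Complex

/-- The Minkowski metric matrix `diag(1, -1, -1, -1)`. -/
noncomputable def eta : Matrix (Fin 4) (Fin 4) ℝ := Matrix.diagonal ![1, -1, -1, -1]

/-- The map `h : ℝ⁴ → (2×2 complex matrices)`,
`h(w) = [[w⁰+w³, w¹−i·w²],[w¹+i·w², w⁰−w³]]`. -/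
noncomputable def hMat (v : Fin 4 → ℝ) : Matrix (Fin 2) (Fin 2) ℂ :=
  !![(v 0 : ℂ) + (v 3 : ℂ), (v 1 : ℂ) - Complex.I * (v 2 : ℂ);
     (v 1 : ℂ) + Complex.I * (v 2 : ℂ), (v 0 : ℂ) - (v 3 : ℂ)]

/-- The map `w` taking a 2×2 complex matrix `A` to the 4-tuple
`((A₁₁+A₂₂)/2, (A₁₂+A₂₁)/2, (i·A₁₂ − i·A₂₁)/2, (A₁₁−A₂₂)/2)`. -/
noncomputable def wComp (A : Matrix (Fin 2) (Fin 2) ℂ) : Fin 4 → ℂ :=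
  ![(A 0 0 + A 1 1) / 2, (A 0 1 + A 1 0) / 2,
    (Complex.I * A 0 1 - Complex.I * A 1 0) / 2, (A 0 0 - A 1 1) / 2]

/-- **Formula (5.18)**: for `U ∈ SL(2,ℂ)` the `(0,0)`-entry of `φ(U)` equals
`(|U₁₁|² + |U₁₂|² + |U₂₁|² + |U₂₂|²)/2 > 0`, so `φ(U)` is orthochronous. -/
theorem phi_entry_zero_zero
    (U : Matrix (Fin 2) (Fin 2) ℂ) (hU : U.det = 1)
    (S : Matrix (Fin 4) (Fin 4) ℝ)
    (hS : ∀ v : Fin 4 → ℝ, hMat (S.mulVec v) = U * hMat v * Uᴴ) :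
    S 0 0 = (‖U 0 0‖ ^ 2 + ‖U 0 1‖ ^ 2
      + ‖U 1 0‖ ^ 2 + ‖U 1 1‖ ^ 2) / 2 ∧
    0 < S 0 0 := by
  have h := hS ![1,0,0,0]
  have hv : S.mulVec ![1,0,0,0] = fun i => S i 0 := by
    funext i
    simp [Matrix.mulVec, dotProduct, Fin.sum_univ_four, Matrix.vecHead]
  rw [hv] at h
  have h00 := congrFun (congrFun h 0) 0
  have h11 := congrFun (congrFun h 1) 1
  simp only [hMat, Matrix.mul_apply, Fin.sum_univ_two, Matrix.conjTranspose_apply,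
    Matrix.cons_val', Matrix.cons_val_zero, Matrix.cons_val_one, Matrix.head_cons,
    Matrix.head_fin_const, Matrix.empty_val', Matrix.cons_val_fin_one,
    Matrix.cons_val_zero, Matrix.of_apply] at h00 h11
  norm_num [Matrix.cons_val_three, Matrix.cons_val_two, Matrix.tail_cons] at h00 h11
  have key : 2 * (S 0 0 : ℂ) = (‖U 0 0‖ ^ 2 + ‖U 0 1‖ ^ 2
      + ‖U 1 0‖ ^ 2 + ‖U 1 1‖ ^ 2 : ℝ) := by
    simp only [Complex.mul_conj] at h00 h11
    push_cast
    rw [← Complex.ofReal_pow, ← Complex.ofReal_pow, ← Complex.ofReal_pow,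
        ← Complex.ofReal_pow, Complex.sq_norm, Complex.sq_norm, Complex.sq_norm, Complex.sq_norm]
    linear_combination h00 + h11
  have keyR : 2 * S 0 0 = ‖U 0 0‖ ^ 2 + ‖U 0 1‖ ^ 2
      + ‖U 1 0‖ ^ 2 + ‖U 1 1‖ ^ 2 := by
    exact_mod_cast key
  have hne : U 0 0 ≠ 0 ∨ U 0 1 ≠ 0 := by
    by_contra hc
    push_neg at hc
    rw [Matrix.det_fin_two, hc.1, hc.2] at hU
    simp at hU
  constructor
  · linarith
  · rcases hne with hne | hne
    · have := norm_pos_iff.mpr hne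
      nlinarith [norm_nonneg (U 0 1), norm_nonneg (U 1 0), norm_nonneg (U 1 1)]
    · have := norm_pos_iff.mpr hne
      nlinarith [norm_nonneg (U 0 0), norm_nonneg (U 1 0), norm_nonneg (U 1 1)]
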